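/- arXiv:2605.03431 — 4 statements merged into one kernel-verified Lean document; each statement's English description precedes it below -/
import Mathlib

section
/- Let V be a finite set with weights w on unordered pairs, and let T be a maximum-weight spanning tree of the complete graph on V. Then for any two distinct vertices u, v, every path in T from u to v contains an edge xy with w(xy) ≥ w(uv). -/
open SimpleGraph

/-- Total weight of a graph's edges. -/
noncomputable def edgeWeightSum {V : Type*} [Fintype V] (w : Sym2 V → ℝ)
    (G : SimpleGraph V) : ℝ :=
  ∑ e ∈ G.edgeSet.toFinite.toFinset, w e

/-- Splitting a path containing an edge `s(x,y)`: both sides avoid that edge. -/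
lemma aux_split {V : Type*} {T : SimpleGraph V} (x y : V) {a b : V} (q : T.Walk a b)
    (hq : q.IsPath) (hmem : s(x, y) ∈ q.edges) :
    ((T.deleteEdges {s(x, y)}).Reachable a x ∧ (T.deleteEdges {s(x, y)}).Reachable y b) ∨
    ((T.deleteEdges {s(x, y)}).Reachable a y ∧ (T.deleteEdges {s(x, y)}).Reachable x b) := by
  induction q with
  | nil => simp at hmem
  | @cons a c b h q' ih =>
    rw [SimpleGraph.Walk.edges_cons, List.mem_cons] at hmem
    rcases hmem with heq | hmem
    · have hnd := hq.isTrail.edges_nodup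
      rw [SimpleGraph.Walk.edges_cons, List.nodup_cons] at hnd
      have hq' : s(x, y) ∉ q'.edges := by rw [heq]; exact hnd.1
      have hreach : (T.deleteEdges {s(x, y)}).Reachable c b :=
        ⟨q'.toDeleteEdges _ (by intro f hf hfs; rw [Set.mem_singleton_iff] at hfs
                                subst hfs; exact hq' hf)⟩
      rcases Sym2.eq_iff.mp heq with ⟨hx, hy⟩ | ⟨hx, hy⟩
      · subst hx; subst hy; exact Or.inl ⟨SimpleGraph.Reachable.refl _, hreach⟩
      · subst hx; subst hy; exact Or.inr ⟨SimpleGraph.Reachable.refl _, hreach⟩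
    · have hne : s(a, c) ∉ ({s(x, y)} : Set (Sym2 V)) := by
        rw [Set.mem_singleton_iff]
        intro heq
        have hnd := hq.isTrail.edges_nodup
        rw [SimpleGraph.Walk.edges_cons, List.nodup_cons] at hnd
        exact hnd.1 (heq ▸ hmem)
      have hadj : (T.deleteEdges {s(x, y)}).Adj a c := deleteEdges_adj.mpr ⟨h, hne⟩
      rcases ih hq.of_cons hmem with ⟨h1, h2⟩ | ⟨h1, h2⟩
      · exact Or.inl ⟨hadj.reachable.trans h1, h2⟩
      · exact Or.inr ⟨hadj.reachable.trans h1, h2⟩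

/-- MST bottleneck property: in a maximum-weight spanning tree of the complete
graph, every path between `u` and `v` contains an edge of weight at least `w s(u,v)`. -/
theorem stmt_0 {V : Type*} [Fintype V] (w : Sym2 V → ℝ)
    (T : SimpleGraph V) (hT : T.IsTree)
    (hmax : ∀ T' : SimpleGraph V, T'.IsTree → edgeWeightSum w T' ≤ edgeWeightSum w T)
    (u v : V) (huv : u ≠ v) (p : T.Walk u v) (hp : p.IsPath) :
    ∃ e ∈ p.edges, w s(u, v) ≤ w e := by
  classical
  by_contra hcon
  push_neg at hcon
  -- `u` and `v` are not adjacent in `T`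
  have hnadj : ¬ T.Adj u v := by
    intro ha
    have := hT.IsAcyclic.path_unique ⟨p, hp⟩ (SimpleGraph.Path.singleton ha)
    have hpe : p.edges = [s(u, v)] := by
      rw [Subtype.ext_iff] at this
      have h2 : p = SimpleGraph.Walk.cons ha SimpleGraph.Walk.nil := this
      rw [h2]
      simp
    have := hcon s(u, v) (by rw [hpe]; exact List.mem_singleton_self _)
    exact lt_irrefl _ this
  -- pick an edge on the path
  have hpedges : p.edges ≠ [] := by
    cases p with
    | nil => exact absurd rfl huv
    | cons h q => simp
  obtain ⟨e, he⟩ := List.exists_mem_of_ne_nil _ hpedges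
  obtain ⟨x, y⟩ := e
  have heT : s(x, y) ∈ T.edgeSet := p.edges_subset_edgeSet he
  -- u and v are not reachable after deleting the edge
  have hnr : ¬ (T.deleteEdges {s(x, y)}).Reachable u v := by
    rintro ⟨q⟩
    have hq := (q.toPath : _)
    set q' : (T.deleteEdges {s(x, y)}).Walk u v := q.toPath.1 with hq'def
    have hq'path : q'.IsPath := q.toPath.2
    have htrans : ∀ f ∈ q'.edges, f ∈ T.edgeSet := by
      intro f hf
      have := q'.edges_subset_edgeSet hf
      rw [edgeSet_deleteEdges] at this
      exact this.1
    have hq2 : (q'.transfer T htrans).IsPath := hq'path.transfer _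
    have := hT.IsAcyclic.path_unique ⟨q'.transfer T htrans, hq2⟩ ⟨p, hp⟩
    rw [Subtype.ext_iff] at this
    have h2 : q'.transfer T htrans = p := this
    have hmem : s(x, y) ∈ q'.edges := by
      rw [← SimpleGraph.Walk.edges_transfer q' htrans, h2]; exact he
    have := q'.edges_subset_edgeSet hmem
    rw [edgeSet_deleteEdges] at this
    exact this.2 rfl
  -- the exchanged graph
  set D := T.deleteEdges {s(x, y)} with hD
  set T' := D ⊔ fromEdgeSet {s(u, v)} with hT'
  have hDle : D ≤ T' := le_sup_left
  have huvAdj : T'.Adj u v := (sup_adj _ _ _ _).mpr (Or.inr ((fromEdgeSet_adj _).mpr ⟨rfl, huv⟩))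
  -- x and y are reachable in T'
  have hxyR : T'.Reachable x y := by
    rcases aux_split x y p hp he with ⟨h1, h2⟩ | ⟨h1, h2⟩
    · exact ((h1.mono hDle).symm.trans huvAdj.reachable).trans (h2.mono hDle).symm
    · exact ((h2.mono hDle).trans huvAdj.reachable.symm).trans (h1.mono hDle)
  have key : ∀ a c, T.Adj a c → T'.Reachable a c := by
    intro a c hac
    by_cases hcase : s(a, c) = s(x, y)
    · rcases Sym2.eq_iff.mp hcase with ⟨hx, hy⟩ | ⟨hx, hy⟩
      · subst hx; subst hy; exact hxyR
      · subst hx; subst hy; exact hxyR.symm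
    · exact (SimpleGraph.Adj.reachable ((sup_adj _ _ _ _).mpr (Or.inl (deleteEdges_adj.mpr ⟨hac, hcase⟩))))
  -- T' is connected
  have hconn : T'.Connected := by
    rw [connected_iff]
    refine ⟨?_, hT.isConnected.nonempty⟩
    intro a b
    obtain ⟨q⟩ := hT.isConnected.preconnected a b
    induction q with
    | nil => exact SimpleGraph.Reachable.refl _
    | cons h q ih => exact (key _ _ h).trans ih
  -- T' is acyclic
  have hacyc : T'.IsAcyclic := by
    intro a c hc
    by_cases hmem : s(u, v) ∈ c.edges
    · have : T'.Adj u v ∧ (T' \ fromEdgeSet {s(u, v)}).Reachable u v :=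
        (adj_and_reachable_delete_edges_iff_exists_cycle).mpr ⟨a, c, hc, hmem⟩
      refine hnr (this.2.mono ?_)
      intro a' b' hab
      rw [sdiff_adj, hT', sup_adj] at hab
      rcases hab with ⟨h1 | h1, hab2⟩
      · exact h1
      · exact absurd h1 hab2
    · have htrans : ∀ f ∈ c.edges, f ∈ T.edgeSet := by
        intro f hf
        have hfT' := c.edges_subset_edgeSet hf
        rw [hT', edgeSet_sup, edgeSet_fromEdgeSet, hD, edgeSet_deleteEdges] at hfT'
        rcases hfT' with h1 | h1
        · exact h1.1
        · exact absurd ((Set.mem_singleton_iff.mp h1.1) ▸ hf) hmem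
      exact hT.IsAcyclic (c.transfer T htrans) (hc.transfer htrans)
  have hT'tree : T'.IsTree := ⟨hconn, hacyc⟩
  -- weight computation
  have hxyne : s(x, y) ≠ s(u, v) := by
    intro heq
    exact hnadj ((SimpleGraph.mem_edgeSet T).mp (heq ▸ heT))
  have hfinset : T'.edgeSet.toFinite.toFinset
      = insert s(u, v) ((T.edgeSet.toFinite.toFinset).erase s(x, y)) := by
    ext f
    simp only [Set.Finite.mem_toFinset, Finset.mem_insert, Finset.mem_erase,
      Set.Finite.mem_toFinset]
    rw [hT', edgeSet_sup, edgeSet_fromEdgeSet, hD, edgeSet_deleteEdges]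
    rw [Set.mem_union]
    constructor
    · rintro (⟨h1, h2⟩ | ⟨h1, h2⟩)
      · exact Or.inr ⟨by simpa using h2, h1⟩
      · exact Or.inl (by simpa using h1)
    · rintro (rfl | ⟨h1, h2⟩)
      · exact Or.inr ⟨rfl, by simp [Sym2.mk_isDiag_iff, huv]⟩
      · exact Or.inl ⟨h2, by simpa using h1⟩
  have hsum : edgeWeightSum w T'
      = w s(u, v) + (edgeWeightSum w T - w s(x, y)) := by
    rw [edgeWeightSum, hfinset, Finset.sum_insert (by
      simp only [Finset.mem_erase, Set.Finite.mem_toFinset]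
      rintro ⟨-, h2⟩
      exact hnadj h2)]
    congr 1
    have heF : s(x, y) ∈ T.edgeSet.toFinite.toFinset := by
      rwa [Set.Finite.mem_toFinset]
    rw [edgeWeightSum, ← Finset.sum_erase_add _ _ heF]
    ring
  have hlt : w s(x, y) < w s(u, v) := hcon _ he
  have := hmax T' hT'tree
  rw [hsum] at this
  linarith
end

section
/- With the setup of the decomposition identity, diam(φ) ≥ M(φ) and diam(φ) ≥ diam(χ) for every 2-coloring φ of V. -/
open SimpleGraph

lemma reach_trans {V : Type*} {G H : SimpleGraph V}
    (h : ∀ x y, G.Adj x y → H.Reachable x y) {u v : V} (hr : G.Reachable u v) :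
    H.Reachable u v := by
  obtain ⟨p⟩ := hr
  induction p with
  | nil => exact Reachable.refl _
  | cons ha _ ih => exact (h _ _ ha).trans ih

lemma path_split {V : Type*} [DecidableEq V] {G : SimpleGraph V} {u v : V} (p : G.Walk u v)
    (hp : p.IsPath) {e : Sym2 V} (he : e ∈ p.edges) :
    ∃ a b, s(a, b) = e ∧ ∃ (q1 : G.Walk u a) (q2 : G.Walk b v),
      (∀ f ∈ q1.edges, f ∈ p.edges ∧ f ≠ e) ∧ (∀ f ∈ q2.edges, f ∈ p.edges ∧ f ≠ e) := by
  induction p with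
  | nil => simp at he
  | @cons u x v ha q ih =>
    rw [Walk.edges_cons, List.mem_cons] at he
    by_cases h1 : s(u, x) = e
    · refine ⟨u, x, h1, Walk.nil, q, by simp, fun f hf => ⟨by simp [hf], ?_⟩⟩
      rintro rfl
      have := hp.isTrail.edges_nodup
      rw [Walk.edges_cons, h1] at this
      exact (List.nodup_cons.1 this).1 hf
    · have he' : e ∈ q.edges := he.resolve_left (fun h => h1 h.symm)
      obtain ⟨a, b, hab, q1, q2, hq1, hq2⟩ := ih hp.of_cons he'
      exact ⟨a, b, hab, Walk.cons ha q1, q2,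
        fun f hf => by
          rcases (by simpa using hf : f = s(u,x) ∨ f ∈ q1.edges) with rfl | hf'
          · exact ⟨by simp, h1⟩
          · exact ⟨by simp [(hq1 f hf').1], (hq1 f hf').2⟩,
        fun f hf => ⟨by simp [(hq2 f hf).1], (hq2 f hf).2⟩⟩

lemma exchange {V : Type*} [Fintype V] [DecidableEq V] (w : Sym2 V → ℝ)
    (T : SimpleGraph V) [DecidableRel T.Adj] (hT : T.IsTree)
    (hmax : ∀ T' : SimpleGraph V, T'.IsTree → edgeWeightSum w T' ≤ edgeWeightSum w T)
    {u v : V} (huv : u ≠ v) (p : T.Walk u v) (hp : p.IsPath)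
    {e : Sym2 V} (he : e ∈ p.edges) :
    w s(u, v) ≤ w e := by
  by_cases hadj : T.Adj u v
  · -- unique path is the single edge
    have huniq := hT.existsUnique_path u v
    have : p = Walk.cons hadj Walk.nil := by
      exact (huniq.unique hp (by simp [Walk.isPath_def, huv]))
    subst this
    simp only [Walk.edges_cons, Walk.edges_nil, List.mem_singleton] at he
    rw [← he]
  · have heT : e ∈ T.edgeSet := Walk.edges_subset_edgeSet p he
    have hf : s(u, v) ∉ T.edgeSet := hadj
    have hef : s(u, v) ≠ e := fun h => hf (h ▸ heT)
    set f : Sym2 V := s(u, v) with hfdef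
    set T' : SimpleGraph V := (T \ fromEdgeSet {e}) ⊔ fromEdgeSet {f} with hT'
    have hfd : ¬ f.IsDiag := by simp [hfdef, huv]
    have hedge : T'.edgeSet = (T.edgeSet \ {e}) ∪ {f} := by
      rw [hT', edgeSet_sup, edgeSet_sdiff, edgeSet_fromEdgeSet, edgeSet_sdiff_sdiff_isDiag,
        edgeSet_fromEdgeSet]
      ext g
      constructor
      · rintro (⟨h1, h2⟩ | ⟨h1, _⟩)
        · exact Or.inl ⟨h1, h2⟩
        · exact Or.inr h1
      · rintro (⟨h1, h2⟩ | h1)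
        · exact Or.inl ⟨h1, h2⟩
        · exact Or.inr ⟨h1, by simpa [Set.mem_singleton_iff.1 h1] using hfd⟩
    obtain ⟨a, b, hab, q1, q2, hq1, hq2⟩ := path_split p hp he
    have hsub : T \ fromEdgeSet {e} ≤ T' := le_sup_left
    have hle : (T \ fromEdgeSet {e}).edgeSet = T.edgeSet \ {e} := by
      rw [edgeSet_sdiff, edgeSet_fromEdgeSet, edgeSet_sdiff_sdiff_isDiag]
    -- transfer q1 q2 into T'
    have hq1' : ∀ g ∈ q1.edges, g ∈ T'.edgeSet := fun g hg => by
      rw [hedge]; exact Or.inl ⟨Walk.edges_subset_edgeSet p ((hq1 g hg).1), (hq1 g hg).2⟩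
    have hq2' : ∀ g ∈ q2.edges, g ∈ T'.edgeSet := fun g hg => by
      rw [hedge]; exact Or.inl ⟨Walk.edges_subset_edgeSet p ((hq2 g hg).1), (hq2 g hg).2⟩
    have hadjuv : T'.Adj u v := by
      rw [hT']; exact Or.inr (by simp [hfdef, huv])
    have hreach_ab : T'.Reachable a b :=
      ((q1.transfer T' hq1').reverse.reachable).trans
        (hadjuv.reachable.trans (q2.transfer T' hq2').reachable.symm)
    have hpre : T'.Preconnected := by
      intro x y
      refine reach_trans (fun x y hxy => ?_) (hT.isConnected.preconnected x y)
      by_cases hxye : s(x, y) = e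
      · rw [← hab, Sym2.eq_iff] at hxye
        rcases hxye with ⟨rfl, rfl⟩ | ⟨rfl, rfl⟩
        · exact hreach_ab
        · exact hreach_ab.symm
      · exact Adj.reachable (by rw [hT']; exact Or.inl ⟨hxy, by simp [hxye]⟩)
    have hconn : T'.Connected := by
      haveI : Nonempty V := hT.isConnected.nonempty
      exact Connected.mk hpre
    have hacyc : T'.IsAcyclic := by
      intro z c hc
      by_cases hfc : f ∈ c.edges
      · -- f is a bridge in T'
        have hbridge : T'.IsBridge f := by
          rw [hfdef, isBridge_iff]
          refine fun hr => ?_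
          obtain ⟨r⟩ := hr
          have hredge : ∀ g ∈ r.edges, g ∈ T.edgeSet ∧ g ≠ e := by
            intro g hg
            have hg' := Walk.edges_subset_edgeSet r hg
            rw [edgeSet_deleteEdges, hedge] at hg'
            obtain ⟨h1 | h1, h2⟩ := hg'
            · exact ⟨h1.1, h1.2⟩
            · exact absurd (Set.mem_singleton_iff.1 h1) h2
          have htr : ∀ g ∈ r.edges, g ∈ T.edgeSet := fun g hg => (hredge g hg).1
          have hne : e ∉ ((r.transfer T htr).toPath : T.Walk u v).edges := fun hmem => by
            have h2 := Walk.edges_toPath_subset (r.transfer T htr) hmem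
            rw [Walk.edges_transfer] at h2
            exact (hredge e h2).2 rfl
          have heq := (hT.existsUnique_path u v).unique
            (r.transfer T htr).toPath.2 hp
          rw [heq] at hne
          exact hne he
        rw [hfdef] at hbridge
        rw [isBridge_iff_adj_and_forall_cycle_notMem hadjuv] at hbridge
        exact hbridge c hc (hfdef ▸ hfc)
      · have hce : ∀ g ∈ c.edges, g ∈ T.edgeSet := fun g hg => by
          have := Walk.edges_subset_edgeSet c hg
          rw [hedge] at this
          rcases this with ⟨h1, _⟩ | h1
          · exact h1
          · exact absurd (Set.mem_singleton_iff.1 h1 ▸ hg) hfc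
        exact hT.IsAcyclic (c.transfer T hce) (hc.transfer hce)
    have hT'tree : T'.IsTree := ⟨hconn, hacyc⟩
    have hsum := hmax T' hT'tree
    -- weight computation
    have hfin : T'.edgeSet.toFinite.toFinset
        = insert f ((T.edgeSet.toFinite.toFinset).erase e) := by
      ext g
      simp only [Set.Finite.mem_toFinset, hedge, Finset.mem_insert, Finset.mem_erase,
        Set.mem_union, Set.mem_diff, Set.mem_singleton_iff]
      tauto
    have hes : e ∈ T.edgeSet.toFinite.toFinset := (Set.Finite.mem_toFinset _).2 heT
    have hfs : f ∉ (T.edgeSet.toFinite.toFinset).erase e := by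
      simp only [Finset.mem_erase, Set.Finite.mem_toFinset]
      exact fun h => hf h.2
    simp only [edgeWeightSum] at hsum
    rw [hfin, Finset.sum_insert hfs, Finset.sum_erase_eq_sub hes] at hsum
    linarith

/-- `pdiam w φ` : the partition diameter of the 2-coloring `φ`, i.e. the maximum
weight over `φ`-monochromatic pairs of distinct vertices (`⊥` if none). -/
noncomputable def pdiam {V : Type*} [Fintype V] [DecidableEq V]
    (w : Sym2 V → ℝ) (φ : V → Fin 2) : EReal :=
  Finset.sup (Finset.univ.filter fun uv : V × V => uv.1 ≠ uv.2 ∧ φ uv.1 = φ uv.2)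
    fun uv => (w s(uv.1, uv.2) : EReal)

/-- `treeM w T φ` : the maximum weight over `φ`-monochromatic edges of `T`
(`⊥` if none). -/
noncomputable def treeM {V : Type*} [Fintype V] [DecidableEq V]
    (w : Sym2 V → ℝ) (T : SimpleGraph V) [DecidableRel T.Adj] (φ : V → Fin 2) : EReal :=
  Finset.sup (Finset.univ.filter fun uv : V × V => T.Adj uv.1 uv.2 ∧ φ uv.1 = φ uv.2)
    fun uv => (w s(uv.1, uv.2) : EReal)

lemma mono_edge {V : Type*} {T : SimpleGraph V} (χ φ : V → Fin 2)
    (hχ : ∀ a b, T.Adj a b → χ a ≠ χ b) {u v : V} (p : T.Walk u v)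
    (h : ¬(χ u = χ v ↔ φ u = φ v)) :
    ∃ a b, s(a, b) ∈ p.edges ∧ φ a = φ b := by
  induction p with
  | nil => simp at h
  | @cons u x v ha q ih =>
    by_cases hφ : φ u = φ x
    · exact ⟨u, x, by simp, hφ⟩
    · have hc := hχ _ _ ha
      have h' : ¬(χ x = χ v ↔ φ x = φ v) := by
        have : ∀ a b c d e f : Fin 2, a ≠ b → c ≠ d →
            ¬(a = e ↔ c = f) → ¬(b = e ↔ d = f) := by decide
        exact this _ _ _ _ _ _ hc hφ h
      obtain ⟨a, b, hm, hab⟩ := ih h'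
      exact ⟨a, b, by simp [hm], hab⟩

/-- Lower bound for the decomposition identity:
`diam(φ)  ≥ M(φ)` and `diam(φ) ≥ diam(χ)` for every 2-coloring `φ`. -/
theorem stmt_6 {V : Type*} [Fintype V] [DecidableEq V] (w : Sym2 V → ℝ)
    (T : SimpleGraph V) [DecidableRel T.Adj] (hT : T.IsTree)
    (hmax : ∀ T' : SimpleGraph V, T'.IsTree → edgeWeightSum w T' ≤ edgeWeightSum w T)
    (χ : V → Fin 2) (hχ : ∀ a b, T.Adj a b → χ a ≠ χ b)
    (φ : V → Fin 2) :
    treeM w T φ ≤ pdiam w φ ∧ pdiam w χ ≤ pdiam w φ := by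
  constructor
  · exact Finset.sup_mono (by
      intro uv huv
      simp only [Finset.mem_filter, Finset.mem_univ, true_and] at huv ⊢
      exact ⟨huv.1.ne, huv.2⟩)
  · rw [pdiam]
    apply Finset.sup_le
    intro uv huv
    simp only [Finset.mem_filter, Finset.mem_univ, true_and] at huv
    obtain ⟨hne, hχuv⟩ := huv
    by_cases hφuv : φ uv.1 = φ uv.2
    · exact Finset.le_sup (f := fun uv : V × V => (w s(uv.1, uv.2) : EReal))
        (Finset.mem_filter.2 ⟨Finset.mem_univ _, hne, hφuv⟩)
    · obtain ⟨p, hp, -⟩ := hT.existsUnique_path uv.1 uv.2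
      obtain ⟨a, b, hm, hab⟩ := mono_edge χ φ hχ p (by tauto)
      have h1 : w s(uv.1, uv.2) ≤ w s(a, b) := exchange w T hT hmax hne p hp hm
      have hTab : T.Adj a b := Walk.adj_of_mem_edges p hm
      have h2 : (w s(a, b) : EReal) ≤ pdiam w φ := by
        rw [pdiam]
        exact Finset.le_sup (f := fun uv : V × V => (w s(uv.1, uv.2) : EReal))
          (Finset.mem_filter.2 ⟨Finset.mem_univ (a, b), hTab.ne, hab⟩)
      exact le_trans (EReal.coe_le_coe_iff.2 h1) h2
end

section
/- Let V, w, T, χ be as in the decomposition identity, and fix λ ∈ ℝ and c ∈ {0,…,|V|}. Then G_{>λ} (the threshold graph of the complete graph) admits a proper 2-coloring with color class 0 of size c if and only if diam(χ) ≤ λ and the forest T_{>λ} (tree edges of weight > λ) admits a proper 2-coloring with color class 0 of size c. -/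
open SimpleGraph

/-- The threshold graph `G_{>λ}` : edges are pairs of weight greater than `λ`. -/
def thresholdGraph {V : Type*} (w : Sym2 V → ℝ) (lam : ℝ) : SimpleGraph V where
  Adj u v := u ≠ v ∧ lam < w s(u, v)
  symm := by
    constructor
    intro u v h
    refine ⟨h.1.symm, ?_⟩
    rw [Sym2.eq_swap]
    exact h.2
  loopless := by constructor; intro v h; exact h.1 rfl

/-- Size of color class `0` of a 2-coloring. -/
def card0 {V : Type*} [Fintype V] [DecidableEq V] (φ : V → Fin 2) : ℕ :=
  (Finset.univ.filter fun v => φ v = 0).card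


lemma fin2_flip : ∀ a b c : Fin 2, a ≠ b → (a = c ↔ ¬ b = c) := by decide

lemma alt_walk {V : Type*} {G : SimpleGraph V} (ψ : V → Fin 2) {u v : V} (p : G.Walk u v)
    (h : ∀ a b, s(a, b) ∈ p.edges → ψ a ≠ ψ b) : ψ u = ψ v ↔ Even p.length := by
  induction p with
  | nil => simp
  | @cons u x v hadj q ih =>
    have h1 : ψ u ≠ ψ x := h _ _ (by simp)
    have h2 := ih (fun a b hab => h a b (by simp [hab]))
    rw [Walk.length_cons, Nat.even_add_one, ← h2]
    exact fin2_flip _ _ _ h1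

lemma split_walk {V : Type*} {G : SimpleGraph V} {u v : V} (p : G.Walk u v)
    (hnd : p.edges.Nodup) {e : Sym2 V} (he : e ∈ p.edges) :
    ∃ (a b : V) (q : G.Walk u a) (r : G.Walk b v),
      e = s(a, b) ∧ e ∉ q.edges ∧ e ∉ r.edges := by
  induction p with
  | nil => simp at he
  | @cons u x v hadj q ih =>
    rw [Walk.edges_cons] at he hnd
    have hhead : s(u, x) ∉ q.edges := (List.nodup_cons.1 hnd).1
    rcases List.mem_cons.1 he with rfl | he'
    · exact ⟨u, x, Walk.nil, q, rfl, by simp, hhead⟩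
    · obtain ⟨a, b, q', r', rfl, hq', hr'⟩ := ih (List.nodup_cons.1 hnd).2 he'
      refine ⟨a, b, Walk.cons hadj q', r', rfl, ?_, hr'⟩
      simp only [Walk.edges_cons, List.mem_cons]
      rintro (h | h)
      · exact hhead (h ▸ he')
      · exact hq' h

lemma reach_aux {V : Type*} {G H : SimpleGraph V} {a b : V}
    (hH : ∀ e' ∈ G.edgeSet, e' ≠ s(a, b) → e' ∈ H.edgeSet) (hab : H.Reachable a b) :
    ∀ {x y : V}, G.Reachable x y → H.Reachable x y := by
  rintro x y ⟨p⟩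
  induction p with
  | nil => rfl
  | @cons x z y hadj q ih =>
    refine Reachable.trans ?_ ih
    by_cases he : s(x, z) = s(a, b)
    · rcases Sym2.eq_iff.1 he with ⟨rfl, rfl⟩ | ⟨rfl, rfl⟩
      · exact hab
      · exact hab.symm
    · exact (H.mem_edgeSet.1 (hH _ (G.mem_edgeSet.2 hadj) he)).reachable

lemma key_lemma {V : Type*} [Fintype V] [DecidableEq V] (w : Sym2 V → ℝ)
    (T : SimpleGraph V) (hT : T.IsTree)
    (hmax : ∀ T' : SimpleGraph V, T'.IsTree → edgeWeightSum w T' ≤ edgeWeightSum w T)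
    {u v : V} (p : T.Walk u v) (hp : p.IsPath) {e : Sym2 V} (he : e ∈ p.edges) :
    w s(u, v) ≤ w e := by
  by_cases hadj : T.Adj u v
  · have hq : (Walk.cons hadj Walk.nil).IsPath := by simp [hadj.ne]
    have := hT.IsAcyclic.path_unique ⟨p, hp⟩ ⟨Walk.cons hadj Walk.nil, hq⟩
    have hpe : p = Walk.cons hadj Walk.nil := congrArg Subtype.val this
    rw [hpe] at he
    simp only [Walk.edges_cons, Walk.edges_nil, List.mem_singleton] at he
    rw [he]
  · have hnotE : s(u, v) ∉ T.edgeSet := fun h => hadj (T.mem_edgeSet.1 h)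
    have hne : u ≠ v := by
      rintro rfl
      rw [Walk.isPath_iff_eq_nil.1 hp] at he
      simp at he
    have heT : e ∈ T.edgeSet := p.edges_subset_edgeSet he
    have hef : e ≠ s(u, v) := fun h => hnotE (h ▸ heT)
    obtain ⟨a, b, q, r, rfl, hq, hr⟩ := split_walk p hp.edges_nodup he
    set f : Sym2 V := s(u, v) with hf
    set T' : SimpleGraph V := fromEdgeSet ((T.edgeSet \ {s(a, b)}) ∪ {f}) with hT'
    have hES : T'.edgeSet = (T.edgeSet \ {s(a, b)}) ∪ {f} := by
      rw [hT', edgeSet_fromEdgeSet]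
      ext x
      simp only [Set.mem_diff, Set.mem_union, Set.mem_singleton_iff, Set.mem_setOf_eq]
      constructor
      · exact fun h => h.1
      · intro hx
        refine ⟨hx, ?_⟩
        rcases hx with ⟨h1, -⟩ | h1
        · exact T.not_isDiag_of_mem_edgeSet h1
        · subst h1
          show ¬ s(u, v).IsDiag
          rw [Sym2.mk_isDiag_iff]
          exact hne
    have hTsub : ∀ e' ∈ T.edgeSet, e' ≠ s(a, b) → e' ∈ T'.edgeSet := fun e' h1 h2 =>
      hES ▸ Or.inl ⟨h1, h2⟩
    have hadj' : T'.Adj u v := by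
      rw [← T'.mem_edgeSet, hES]
      exact Set.mem_union_right _ rfl
    -- transfer q and r into T'
    have hqsub : ∀ e' ∈ q.edges, e' ∈ T'.edgeSet := fun e' h =>
      hTsub e' (q.edges_subset_edgeSet h) (fun hh => hq (hh ▸ h))
    have hrsub : ∀ e' ∈ r.edges, e' ∈ T'.edgeSet := fun e' h =>
      hTsub e' (r.edges_subset_edgeSet h) (fun hh => hr (hh ▸ h))
    have hab : T'.Reachable a b :=
      ⟨(q.transfer T' hqsub).reverse.append
        (Walk.cons hadj' (r.transfer T' hrsub).reverse)⟩
    have hconn : T'.Connected := by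
      rw [connected_iff]
      exact ⟨fun x y => reach_aux hTsub hab (hT.isConnected.preconnected x y),
        hT.isConnected.nonempty⟩
    have hacyc : T'.IsAcyclic := by
      intro x c hc
      by_cases hfc : f ∈ c.edges
      · have := (adj_and_reachable_delete_edges_iff_exists_cycle (G := T')).2 ⟨x, c, hc, hfc⟩
        obtain ⟨p', hp'⟩ := reachable_delete_edges_iff_exists_walk.1 this.2
        have hsub : ∀ e' ∈ p'.edges, e' ∈ T.edgeSet := by
          intro e' h
          have := p'.edges_subset_edgeSet h
          rw [hES] at this
          rcases this with ⟨h1, -⟩ | h1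
          · exact h1
          · rw [Set.mem_singleton_iff] at h1
            exact absurd h1 (fun hh => hp' (by rwa [hh] at h))
        have hep' : s(a, b) ∉ p'.edges := by
          intro h
          have := p'.edges_subset_edgeSet h
          rw [hES] at this
          rcases this with ⟨-, h1⟩ | h1
          · exact h1 rfl
          · exact hef h1
        set p'' := p'.transfer T hsub with hp''
        have huniq := hT.IsAcyclic.path_unique ⟨p, hp⟩ p''.toPath
        have : s(a, b) ∈ (p''.toPath : T.Walk u v).edges := by
          rw [← congrArg Subtype.val huniq]; exact he
        have : s(a, b) ∈ p''.edges := p''.edges_toPath_subset this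
        rw [hp'', Walk.edges_transfer] at this
        exact hep' this
      · have hsub : ∀ e' ∈ c.edges, e' ∈ T.edgeSet := by
          intro e' h
          have := c.edges_subset_edgeSet h
          rw [hES] at this
          rcases this with ⟨h1, -⟩ | h1
          · exact h1
          · rw [Set.mem_singleton_iff] at h1
            exact absurd h1 (fun hh => hfc (hh ▸ h))
        exact hT.IsAcyclic (c.transfer T hsub) (hc.transfer hsub)
    have htree : T'.IsTree := ⟨hconn, hacyc⟩
    have hle := hmax T' htree
    -- now compute sums
    have heS : s(a, b) ∈ T.edgeSet.toFinite.toFinset := by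
      rw [Set.Finite.mem_toFinset]; exact heT
    have hfS : f ∉ T.edgeSet.toFinite.toFinset := by
      rw [Set.Finite.mem_toFinset]; exact hnotE
    have hS'eq : T'.edgeSet.toFinite.toFinset
        = insert f ((T.edgeSet.toFinite.toFinset).erase s(a, b)) := by
      ext x
      simp only [Set.Finite.mem_toFinset, hES, Set.mem_union, Set.mem_diff,
        Set.mem_singleton_iff, Finset.mem_insert, Finset.mem_erase]
      tauto
    have hsum' : edgeWeightSum w T'
        = w f + (∑ x ∈ (T.edgeSet.toFinite.toFinset).erase s(a, b), w x) := by
      rw [edgeWeightSum, hS'eq, Finset.sum_insert (by simp [hef.symm, hfS])]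
    have hsum : edgeWeightSum w T
        = w s(a, b) + (∑ x ∈ (T.edgeSet.toFinite.toFinset).erase s(a, b), w x) := by
      rw [edgeWeightSum, ← Finset.add_sum_erase _ w heS]
    rw [hsum', hsum] at hle
    linarith

/-- `G_{>λ}` admits a proper 2-coloring with color class 0 of size `c` iff
`diam(χ) ≤ λ` and the forest `T_{>λ}` admits such a coloring. -/
theorem stmt_8 {V : Type*} [Fintype V] [DecidableEq V] (w : Sym2 V → ℝ)
    (T : SimpleGraph V) [DecidableRel T.Adj] (hT : T.IsTree)
    (hmax : ∀ T' : SimpleGraph V, T'.IsTree → edgeWeightSum w T' ≤ edgeWeightSum w T)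
    (χ : V → Fin 2) (hχ : ∀ a b, T.Adj a b → χ a ≠ χ b)
    (lam : ℝ) (c : ℕ) (hc : c ≤ Fintype.card V) :
    (∃ φ : V → Fin 2,
        (∀ u v, (thresholdGraph w lam).Adj u v → φ u ≠ φ v) ∧ card0 φ = c) ↔
      (pdiam w χ ≤ (lam : EReal) ∧
        ∃ φ : V → Fin 2,
          (∀ u v, T.Adj u v → lam < w s(u, v) → φ u ≠ φ v) ∧ card0 φ = c) := by
  constructor
  · rintro ⟨φ, hφ, hcard⟩
    refine ⟨?_, φ, fun u v hadj hw => hφ u v ⟨hadj.ne, hw⟩, hcard⟩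
    rw [pdiam]
    apply Finset.sup_le
    intro uv hmem
    simp only [Finset.mem_filter, Finset.mem_univ, true_and] at hmem
    obtain ⟨hne, hmono⟩ := hmem
    rw [EReal.coe_le_coe_iff]
    by_contra hgt
    push_neg at hgt
    obtain ⟨pw⟩ := hT.isConnected.preconnected uv.1 uv.2
    set p := pw.toPath with hp
    have hχeven : Even (p : T.Walk uv.1 uv.2).length :=
      (alt_walk χ _ (fun a b hab => hχ a b (Walk.adj_of_mem_edges _ hab))).1 hmono
    have hkey : ∀ e ∈ (p : T.Walk uv.1 uv.2).edges, lam < w e := fun e hein =>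
      lt_of_lt_of_le hgt (key_lemma w T hT hmax _ p.2 hein)
    have hφiff := alt_walk φ (p : T.Walk uv.1 uv.2)
      (fun a b hab => hφ a b ⟨(Walk.adj_of_mem_edges _ hab).ne, hkey _ hab⟩)
    exact hφ _ _ ⟨hne, hgt⟩ (hφiff.2 hχeven)
  · rintro ⟨hdiam, φ, hφ, hcard⟩
    refine ⟨φ, ?_, hcard⟩
    rintro u v ⟨hne, hw⟩
    have hχne : χ u ≠ χ v := by
      intro heq
      have hmem : (u, v) ∈ Finset.univ.filter
          (fun uv : V × V => uv.1 ≠ uv.2 ∧ χ uv.1 = χ uv.2) := by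
        simp [hne, heq]
      have h1 := Finset.le_sup (f := fun uv : V × V => (w s(uv.1, uv.2) : EReal)) hmem
      have h2 := le_trans h1 hdiam
      rw [EReal.coe_le_coe_iff] at h2
      exact absurd h2 (not_le.2 hw)
    obtain ⟨pw⟩ := hT.isConnected.preconnected u v
    set p := pw.toPath with hp
    have hχiff := alt_walk χ (p : T.Walk u v)
      (fun a b hab => hχ a b (Walk.adj_of_mem_edges _ hab))
    have hkey : ∀ e ∈ (p : T.Walk u v).edges, lam < w e := fun e hein =>
      lt_of_lt_of_le hw (key_lemma w T hT hmax _ p.2 hein)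
    have hφiff := alt_walk φ (p : T.Walk u v)
      (fun a b hab => hφ a b (Walk.adj_of_mem_edges _ hab) (hkey _ hab))
    intro hfeq
    exact hχne (hχiff.2 (hφiff.1 hfeq))
end

section
/- For V, w, T, χ as above and c ∈ {0,…,|V|}, define M*(c) = min over 2-colorings φ with |φ⁻¹(0)| = c of M(φ) (the heaviest φ-monochromatic tree edge, −∞ if none). Then the minimum of diam(φ) over all 2-colorings φ with |φ⁻¹(0)| = c equals max(diam(χ), M*(c)). -/
open SimpleGraph

section Aux

variable {V : Type*}

private lemma fin2_helper : ∀ pu pb pv cu cb cv : Fin 2,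
    pu ≠ pb → cu ≠ cb → ((pb = pv) ↔ (cb = cv)) → ((pu = pv) ↔ (cu = cv)) := by decide

/-- Transfer reachability from `G` to `H` when `H` contains `G` minus one edge and
`x, y` are `H`-reachable. -/
private lemma reach_trans_s9 {G H : SimpleGraph V} {x y : V}
    (hle : G.deleteEdges {s(x, y)} ≤ H) (hxy : H.Reachable x y) :
    ∀ a b : V, G.Reachable a b → H.Reachable a b := by
  rintro a b ⟨p⟩
  induction p with
  | nil => exact Reachable.refl _
  | @cons a c b h p ih =>
    refine Reachable.trans ?_ ih
    by_cases he : s(a, c) = s(x, y)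
    · rcases Sym2.eq_iff.mp he with ⟨rfl, rfl⟩ | ⟨rfl, rfl⟩
      · exact hxy
      · exact hxy.symm
    · exact (hle (SimpleGraph.deleteEdges_adj.mpr ⟨h, by simpa using he⟩)).reachable

/-- After deleting an edge `s(x,y)`, every vertex with a walk to some vertex that
reaches `x` or `y` still reaches `x` or `y`. -/
private lemma comp_step {G : SimpleGraph V} {x y : V} :
    ∀ {a b : V}, G.Walk a b →
      ((G.deleteEdges {s(x, y)}).Reachable b x ∨ (G.deleteEdges {s(x, y)}).Reachable b y) →
      ((G.deleteEdges {s(x, y)}).Reachable a x ∨ (G.deleteEdges {s(x, y)}).Reachable a y) := by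
  intro a b p
  induction p with
  | nil => exact id
  | @cons a c b h p ih =>
    intro hb
    by_cases he : s(a, c) = s(x, y)
    · rcases Sym2.eq_iff.mp he with ⟨rfl, rfl⟩ | ⟨rfl, rfl⟩
      · exact Or.inl (Reachable.refl _)
      · exact Or.inr (Reachable.refl _)
    · have hac : (G.deleteEdges {s(x, y)}).Adj a c :=
        SimpleGraph.deleteEdges_adj.mpr ⟨h, by simpa using he⟩
      rcases ih hb with h' | h'
      · exact Or.inl (hac.reachable.trans h')
      · exact Or.inr (hac.reachable.trans h')

variable [Fintype V] [DecidableEq V]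

/-- The exchange argument for maximum spanning trees. -/
private lemma exchange_s9 (w : Sym2 V → ℝ) (T : SimpleGraph V) (hT : T.IsTree)
    (hmax : ∀ T' : SimpleGraph V, T'.IsTree → edgeWeightSum w T' ≤ edgeWeightSum w T)
    {x y u v : V} (hadj : T.Adj x y)
    (hnr : ¬ (T.deleteEdges {s(x, y)}).Reachable u v) :
    w s(u, v) ≤ w s(x, y) := by
  have huv : u ≠ v := by rintro rfl; exact hnr (Reachable.refl _)
  by_cases hA : T.Adj u v
  · have hsuv : s(u, v) = s(x, y) := by
      by_contra hne
      exact hnr ((SimpleGraph.deleteEdges_adj.mpr ⟨hA, by simpa using hne⟩)).reachable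
    rw [hsuv]
  · set D := T.deleteEdges {s(x, y)} with hD
    set T' := D ⊔ SimpleGraph.edge u v with hT'def
    have hDle : D ≤ T' := le_sup_left
    have hedge : T'.Adj u v :=
      (sup_adj _ _ _ _).mpr (Or.inr ((edge_adj u v u v).mpr ⟨Or.inl ⟨rfl, rfl⟩, huv⟩))
    have hcomp : ∀ a, D.Reachable a x ∨ D.Reachable a y := fun a =>
      comp_step ((hT.isConnected.preconnected a x).some) (Or.inl (Reachable.refl _))
    have hxyT' : T'.Reachable x y := by
      rcases hcomp u with hu | hu <;> rcases hcomp v with hv | hv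
      · exact absurd (hu.trans hv.symm) hnr
      · exact ((hu.mono hDle).symm.trans (hedge.reachable.trans (hv.mono hDle)))
      · exact ((hv.mono hDle).symm.trans (hedge.symm.reachable.trans (hu.mono hDle)))
      · exact absurd (hu.trans hv.symm) hnr
    have hconn : T'.Connected := by
      rw [connected_iff]
      exact ⟨fun a b => reach_trans_s9 hDle hxyT' a b (hT.isConnected.preconnected a b),
        hT.isConnected.nonempty⟩
    have hsne : s(u, v) ≠ s(x, y) := by
      intro h
      exact hA ((SimpleGraph.mem_edgeSet _).mp (h ▸ ((SimpleGraph.mem_edgeSet _).mpr hadj)))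
    have hacyc : T'.IsAcyclic := by
      intro a p hp
      by_cases he : s(u, v) ∈ p.edges
      · obtain ⟨-, hreach⟩ :=
          (SimpleGraph.adj_and_reachable_delete_edges_iff_exists_cycle).mpr ⟨a, p, hp, he⟩
        refine hnr (hreach.mono ?_)
        intro a b hab
        have hab' : (T'.deleteEdges {s(u, v)}).Adj a b := hab
        rw [SimpleGraph.deleteEdges_adj] at hab'
        obtain ⟨hab1, hab2⟩ := hab'
        rcases (sup_adj _ _ _ _).mp hab1 with h' | h'
        · exact h'
        · exfalso
          apply hab2
          obtain ⟨h1, -⟩ := (edge_adj u v a b).mp h'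
          rcases h1 with ⟨rfl, rfl⟩ | ⟨rfl, rfl⟩
          · simp
          · simp [Sym2.eq_swap]
      · have hsub : ∀ e ∈ p.edges, e ∈ T.edgeSet := by
          intro e hep
          have hmem := p.edges_subset_edgeSet hep
          rw [hT'def, edgeSet_sup, hD, edgeSet_deleteEdges, edge_edgeSet_of_ne huv] at hmem
          rcases hmem with h' | h'
          · exact h'.1
          · exact absurd (Set.mem_singleton_iff.mp h' ▸ hep) he
        exact hT.IsAcyclic (p.transfer T hsub) (hp.transfer hsub)
    have hT'tree : T'.IsTree := ⟨hconn, hacyc⟩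
    have key := hmax T' hT'tree
    have hEF : T'.edgeSet.toFinite.toFinset
        = insert s(u, v) ((T.edgeSet.toFinite.toFinset).erase s(x, y)) := by
      ext e
      simp only [Set.Finite.mem_toFinset, Finset.mem_insert, Finset.mem_erase,
        hT'def, edgeSet_sup, hD, edgeSet_deleteEdges, edge_edgeSet_of_ne huv,
        Set.mem_union, Set.mem_diff, Set.mem_singleton_iff]
      tauto
    have hsuv_not : s(u, v) ∉ (T.edgeSet.toFinite.toFinset).erase s(x, y) := by
      intro h
      exact hA ((SimpleGraph.mem_edgeSet _).mp (Set.Finite.mem_toFinset _ |>.mp (Finset.mem_of_mem_erase h)))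
    have hxy_mem : s(x, y) ∈ T.edgeSet.toFinite.toFinset :=
      (Set.Finite.mem_toFinset _).mpr ((SimpleGraph.mem_edgeSet _).mpr hadj)
    have hsum : edgeWeightSum w T'
        = w s(u, v) + (edgeWeightSum w T - w s(x, y)) := by
      rw [edgeWeightSum, hEF, Finset.sum_insert hsuv_not, Finset.sum_erase_eq_sub hxy_mem]
      rfl
    rw [hsum] at key
    linarith

/-- Every edge on a path between `u` and `v` in the max spanning tree is at least
as heavy as `w s(u,v)`. -/
private lemma keyW (w : Sym2 V → ℝ) (T : SimpleGraph V) (hT : T.IsTree)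
    (hmax : ∀ T' : SimpleGraph V, T'.IsTree → edgeWeightSum w T' ≤ edgeWeightSum w T)
    {u v : V} (p : T.Walk u v) (hp : p.IsPath)
    {x y : V} (he : s(x, y) ∈ p.edges) : w s(u, v) ≤ w s(x, y) := by
  have hadj : T.Adj x y := p.adj_of_mem_edges he
  refine exchange_s9 w T hT hmax hadj ?_
  rintro ⟨q⟩
  have hq : ∀ e ∈ q.edges, e ∈ T.edgeSet := by
    intro e hqe
    have := q.edges_subset_edgeSet hqe
    rw [edgeSet_deleteEdges] at this
    exact this.1
  have hq'path : (q.transfer T hq).toPath.1.IsPath := (q.transfer T hq).toPath.2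
  have huniq := hT.existsUnique_path u v
  have hpe : p = ((q.transfer T hq).toPath : T.Walk u v) := huniq.unique hp hq'path
  have hmem : s(x, y) ∈ (q.transfer T hq).edges :=
    SimpleGraph.Walk.edges_toPath_subset _ (hpe ▸ he)
  rw [SimpleGraph.Walk.edges_transfer] at hmem
  have hmem2 := q.edges_subset_edgeSet hmem
  rw [edgeSet_deleteEdges] at hmem2
  exact hmem2.2 rfl

omit [Fintype V] [DecidableEq V] in
/-- Alternation: if a walk has no `φ`-monochromatic edge, `φ` and `χ` agree on
whether the endpoints are monochromatic. -/
private lemma alt_lemma {T : SimpleGraph V} (χ φ : V → Fin 2)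
    (hχ : ∀ a b, T.Adj a b → χ a ≠ χ b) :
    ∀ {u v : V} (p : T.Walk u v),
      (∀ a b, s(a, b) ∈ p.edges → φ a ≠ φ b) → ((φ u = φ v) ↔ (χ u = χ v)) := by
  intro u v p
  induction p with
  | nil => simp
  | @cons a c b h p ih =>
    intro hm
    have h1 : φ a ≠ φ c := hm a c (by simp)
    have h2 : χ a ≠ χ c := hχ a c h
    exact fin2_helper _ _ _ _ _ _ h1 h2 (ih (fun a b hab => hm a b (by simp [hab])))

end Aux

section Main

variable {V : Type*} [Fintype V] [DecidableEq V] (w : Sym2 V → ℝ)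
  (T : SimpleGraph V) [DecidableRel T.Adj] (hT : T.IsTree)
  (hmax : ∀ T' : SimpleGraph V, T'.IsTree → edgeWeightSum w T' ≤ edgeWeightSum w T)
  (χ : V → Fin 2) (hχ : ∀ a b, T.Adj a b → χ a ≠ χ b)

include hT hmax hχ in
private lemma pdiam_le_max (φ : V → Fin 2) :
    pdiam w φ ≤ max (pdiam w χ) (treeM w T φ) := by
  apply Finset.sup_le
  rintro ⟨u, v⟩ hmem
  rw [Finset.mem_filter] at hmem
  obtain ⟨-, hne, hmono⟩ := hmem
  obtain ⟨p, hp, -⟩ := hT.existsUnique_path u v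
  by_cases hc : ∀ a b, s(a, b) ∈ p.edges → φ a ≠ φ b
  · have hcuv : χ u = χ v := (alt_lemma χ φ hχ p hc).mp hmono
    refine le_trans ?_ (le_max_left _ _)
    exact Finset.le_sup (f := fun uv : V × V => (w s(uv.1, uv.2) : EReal))
      (Finset.mem_filter.mpr ⟨Finset.mem_univ _, hne, hcuv⟩)
  · push_neg at hc
    obtain ⟨a, b, hab, heq⟩ := hc
    refine le_trans ?_ (le_max_right _ _)
    refine le_trans ?_ (Finset.le_sup (f := fun uv : V × V => (w s(uv.1, uv.2) : EReal))
      (b := (a, b)) (Finset.mem_filter.mpr ⟨Finset.mem_univ _, p.adj_of_mem_edges hab, heq⟩))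
    show ((w s(u, v) : ℝ) : EReal) ≤ ((w s(a, b) : ℝ) : EReal)
    exact_mod_cast keyW w T hT hmax p hp hab

omit [DecidableRel T.Adj] in
include hT hmax hχ in
private lemma pdiam_chi_le (φ : V → Fin 2) : pdiam w χ ≤ pdiam w φ := by
  apply Finset.sup_le
  rintro ⟨u, v⟩ hmem
  rw [Finset.mem_filter] at hmem
  obtain ⟨-, hne, hmono⟩ := hmem
  obtain ⟨p, hp, -⟩ := hT.existsUnique_path u v
  by_cases hc : ∀ a b, s(a, b) ∈ p.edges → φ a ≠ φ b
  · have hfuv : φ u = φ v := (alt_lemma χ φ hχ p hc).mpr hmono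
    exact Finset.le_sup (f := fun uv : V × V => (w s(uv.1, uv.2) : EReal))
      (Finset.mem_filter.mpr ⟨Finset.mem_univ _, hne, hfuv⟩)
  · push_neg at hc
    obtain ⟨a, b, hab, heq⟩ := hc
    have hadj : T.Adj a b := p.adj_of_mem_edges hab
    refine le_trans ?_ (Finset.le_sup (f := fun uv : V × V => (w s(uv.1, uv.2) : EReal))
      (b := (a, b)) (Finset.mem_filter.mpr ⟨Finset.mem_univ _, hadj.ne, heq⟩))
    show ((w s(u, v) : ℝ) : EReal) ≤ ((w s(a, b) : ℝ) : EReal)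
    exact_mod_cast keyW w T hT hmax p hp hab

private lemma treeM_le_pdiam (φ : V → Fin 2) : treeM w T φ ≤ pdiam w φ := by
  apply Finset.sup_le
  rintro ⟨u, v⟩ hmem
  rw [Finset.mem_filter] at hmem
  obtain ⟨-, hadj, hmono⟩ := hmem
  exact Finset.le_sup (f := fun uv : V × V => (w s(uv.1, uv.2) : EReal))
    (Finset.mem_filter.mpr ⟨Finset.mem_univ _, hadj.ne, hmono⟩)

include hT hmax hχ in
private lemma pdiam_eq_max (φ : V → Fin 2) :
    pdiam w φ = max (pdiam w χ) (treeM w T φ) :=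
  le_antisymm (pdiam_le_max w T hT hmax χ hχ φ)
    (max_le (pdiam_chi_le w T hT hmax χ hχ φ) (treeM_le_pdiam w T φ))

end Main

/-- The optimum partition diameter at cardinality `c` equals
`max (diam χ) (M*(c))`, where `M*(c)` is the minimum heaviest monochromatic
tree edge over cardinality-`c` colorings. -/
theorem stmt_9 {V : Type*} [Fintype V] [DecidableEq V] (w : Sym2 V → ℝ)
    (T : SimpleGraph V) [DecidableRel T.Adj] (hT : T.IsTree)
    (hmax : ∀ T' : SimpleGraph V, T'.IsTree → edgeWeightSum w T' ≤ edgeWeightSum w T)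
    (χ : V → Fin 2) (hχ : ∀ a b, T.Adj a b → χ a ≠ χ b)
    (c : ℕ) (hc : c ≤ Fintype.card V) :
    sInf {d : EReal | ∃ φ : V → Fin 2, card0 φ = c ∧ d = pdiam w φ} =
      max (pdiam w χ)
        (sInf {m : EReal | ∃ φ : V → Fin 2, card0 φ = c ∧ m = treeM w T φ}) := by
  classical
  have heq : ∀ φ : V → Fin 2, pdiam w φ = max (pdiam w χ) (treeM w T φ) :=
    pdiam_eq_max w T hT hmax χ hχ
  set K := pdiam w χ with hK
  set A := {d : EReal | ∃ φ : V → Fin 2, card0 φ = c ∧ d = pdiam w φ} with hA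
  set B := {m : EReal | ∃ φ : V → Fin 2, card0 φ = c ∧ m = treeM w T φ} with hB
  -- nonemptiness
  obtain ⟨t, -, ht⟩ := Finset.exists_subset_card_eq
    (s := (Finset.univ : Finset V)) (n := c) (by simpa using hc)
  have hφ0 : card0 (fun v => if v ∈ t then (0 : Fin 2) else 1) = c := by
    rw [← ht, card0]
    congr 1
    ext v
    by_cases hv : v ∈ t <;> simp [hv]
  have hBne : B.Nonempty := ⟨_, _, hφ0, rfl⟩
  have hBfin : B.Finite := by
    have hsub : B ⊆ (fun φ : V → Fin 2 => treeM w T φ) '' Set.univ := by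
      rintro m ⟨φ, -, rfl⟩
      exact ⟨φ, Set.mem_univ _, rfl⟩
    exact Set.Finite.subset (Set.finite_univ.image _) hsub
  have hmem : sInf B ∈ B := hBne.csInf_mem hBfin
  apply le_antisymm
  · obtain ⟨φ, hφc, hφm⟩ := hmem
    have : max K (sInf B) ∈ A := ⟨φ, hφc, by rw [heq φ, ← hφm]⟩
    exact sInf_le this
  · apply le_sInf
    rintro d ⟨φ, hφc, rfl⟩
    rw [heq φ]
    exact max_le_max le_rfl (sInf_le ⟨φ, hφc, rfl⟩)
end
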